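/- Let h(w) = r²·w/|w|² for r > 0 be inversion in the sphere of radius r. For all nonzero x, y ∈ ℝⁿ with |x| ≤ |y|, letting z = x·(|x| + |x-y|)/|x|, one has |h(x) - h(z)| ≤ |h(x) - h(y)| ≤ 3·|h(x) - h(z)|, with equality in the upper bound when x = -y. -/

import Mathlib

theorem stmt_12 (n : ℕ) (r : ℝ) (hr : 0 < r)
    (x y : EuclideanSpace ℝ (Fin n)) (hx : x ≠ 0) (hy : y ≠ 0) (hxy : ‖x‖ ≤ ‖y‖) :
    let h : EuclideanSpace ℝ (Fin n) → EuclideanSpace ℝ (Fin n) :=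
      fun w => (r ^ 2 / ‖w‖ ^ 2) • w
    let z := ((‖x‖ + ‖x - y‖) / ‖x‖) • x
    ‖h x - h z‖ ≤ ‖h x - h y‖ ∧ ‖h x - h y‖ ≤ 3 * ‖h x - h z‖ ∧
    (x = -y → ‖h x - h y‖ = 3 * ‖h x - h z‖) := by
  intro h z
  have ha : (0:ℝ) < ‖x‖ := norm_pos_iff.mpr hx
  have hb : (0:ℝ) < ‖y‖ := norm_pos_iff.mpr hy
  have hd : (0:ℝ) ≤ ‖x - y‖ := norm_nonneg _
  set a := ‖x‖ with ha'
  set b := ‖y‖ with hb'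
  set d := ‖x - y‖ with hd'
  have key : ∀ u v : EuclideanSpace ℝ (Fin n), u ≠ 0 → v ≠ 0 →
      ‖h u - h v‖ = r ^ 2 / (‖u‖ * ‖v‖) * ‖u - v‖ := by
    intro u v hu hv
    have h1 := EuclideanGeometry.dist_inversion_inversion
      (c := (0 : EuclideanSpace ℝ (Fin n))) hu hv r
    simpa [EuclideanGeometry.inversion, dist_eq_norm, div_pow, h] using h1
  -- properties of z
  have hcoef : (0:ℝ) < (a + d) / a := by positivity
  have hz_ne : z ≠ 0 := by
    simp only [z, smul_ne_zero_iff]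
    exact ⟨ne_of_gt hcoef, hx⟩
  have hnz : ‖z‖ = a + d := by
    rw [show z = ((a + d) / a) • x from rfl, norm_smul, Real.norm_eq_abs,
      abs_of_pos hcoef, ← ha']
    field_simp
  have hxz : ‖x - z‖ = d := by
    have h2 : x - z = (1 - (a + d) / a) • x := by rw [sub_smul, one_smul]
    have h3 : 1 - (a + d) / a = -(d / a) := by field_simp; ring
    rw [h2, h3, norm_smul, Real.norm_eq_abs, abs_neg, abs_of_nonneg (by positivity), ← ha']
    field_simp
  have e1 : ‖h x - h z‖ = r ^ 2 / (a * (a + d)) * d := by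
    rw [key x z hx hz_ne, hnz, hxz]
  have e2 : ‖h x - h y‖ = r ^ 2 / (a * b) * d := by
    rw [key x y hx hy]
  have hbad : b ≤ a + d := by
    calc b = ‖x - (x - y)‖ := by simp [hb']
    _ ≤ a + d := by
      have := norm_sub_le x (x - y); simpa using this
  have had3 : a + d ≤ 3 * b := by
    have : d ≤ a + b := by
      have := norm_sub_le x y; simpa using this
    linarith
  refine ⟨?_, ?_, ?_⟩
  · rw [e1, e2]
    gcongr <;> first | positivity | nlinarith
  · rw [e1, e2]
    rw [div_mul_eq_mul_div, div_mul_eq_mul_div, ← mul_div_assoc]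
    rw [div_le_div_iff₀ (by positivity) (by positivity)]
    have hnn : (0:ℝ) ≤ r ^ 2 * d * a := by positivity
    nlinarith [mul_le_mul_of_nonneg_left had3 hnn]
  · intro hxy'
    have hba : b = a := by rw [hb', ha', hxy', norm_neg]
    have hd2 : d = 2 * a := by
      have h4 : x - y = (-2 : ℝ) • y := by rw [hxy']; module
      rw [hd', h4, norm_smul, ← hb', hba]
      norm_num
    rw [e1, e2, hba, hd2]
    field_simp
    ring
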